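/- Filon–Simpson quadrature is exact on the quadratic interpolant: let λ ∈ ℂ, Δt > 0 with z := Δt·λ ≠ 0, let a ∈ ℝ, and let G₋, G₀, G₊ ∈ ℂ. Let P(τ) be the unique quadratic polynomial with P(a) = G₋, P(a+Δt) = G₀, P(a+2Δt) = G₊, i.e. P(τ) = G₋ (τ−a−Δt)(τ−a−2Δt)/(2Δt²) − G₀ (τ−a)(τ−a−2Δt)/Δt² + G₊ (τ−a)(τ−a−Δt)/(2Δt²). Then ∫_{a}^{a+2Δt} e^{(a−τ)λ} P(τ) dτ = q₁ G₋ + q₂ G₀ + q₃ G₊, where q₁ = Δt(−z e^{−2z} − 2e^{−2z} + 2z² − 3z + 2)/(2z³), q₂ = Δt(2z e^{−2z} + 2e^{−2z} + 2z − 2)/z³, and q₃ = Δt(−2z² e^{−2z} − 3z e^{−2z} − 2e^{−2z} − z + 2)/(2z³). -/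

import Mathlib

open MeasureTheory intervalIntegral

lemma filon_key (lam A B C : ℂ) (hlam : lam ≠ 0) (a b : ℝ) :
    (∫ τ in a..b, Complex.exp (((a - τ : ℝ) : ℂ) * lam) * (A * (τ:ℂ)^2 + B * τ + C))
    = (fun t : ℂ => -Complex.exp (((a:ℂ) - t) * lam) *
        ((A * t^2 + B * t + C)/lam + (2*A*t + B)/lam^2 + 2*A/lam^3)) (b:ℂ)
      - (fun t : ℂ => -Complex.exp (((a:ℂ) - t) * lam) *
        ((A * t^2 + B * t + C)/lam + (2*A*t + B)/lam^2 + 2*A/lam^3)) (a:ℂ) := by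
  set F : ℂ → ℂ := fun t : ℂ => -Complex.exp (((a:ℂ) - t) * lam) *
      ((A * t^2 + B * t + C)/lam + (2*A*t + B)/lam^2 + 2*A/lam^3) with hF
  have hderiv : ∀ t : ℂ, HasDerivAt F
      (Complex.exp (((a:ℂ) - t) * lam) * (A * t^2 + B * t + C)) t := by
    intro t
    have h1 : HasDerivAt (fun t : ℂ => Complex.exp (((a:ℂ) - t) * lam))
        (Complex.exp (((a:ℂ) - t) * lam) * (-1 * lam)) t :=
      (((hasDerivAt_id t).const_sub (a:ℂ)).mul_const lam).cexp
    have h2 : HasDerivAt (fun t : ℂ =>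
        (A * t^2 + B * t + C)/lam + (2*A*t + B)/lam^2 + 2*A/lam^3)
        ((A * (2 * t^(2-1) * 1) + B * 1)/lam + (2*A*1)/lam^2) t := by
      have hp : HasDerivAt (fun t : ℂ => A * t^2 + B * t + C)
          (A * (2 * t^(2-1) * 1) + B * 1) t := by
        exact ((((hasDerivAt_id t).pow 2).const_mul A).add
          ((hasDerivAt_id t).const_mul B)).add_const C
      exact ((hp.div_const lam).add
        (((((hasDerivAt_id t).const_mul (2*A))).add_const B).div_const (lam^2))).add_const
        (2*A/lam^3)
    have h3 := (h1.mul h2).neg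
    have hfun : (fun x : ℂ => -(Complex.exp (((a:ℂ) - x) * lam) *
        ((A * x ^ 2 + B * x + C) / lam + (2 * A * x + B) / lam ^ 2 + 2 * A / lam ^ 3))) = F := by
      funext x; simp [hF, neg_mul]
    rw [show (-((fun t : ℂ => Complex.exp (((a:ℂ) - t) * lam)) * fun t : ℂ =>
        (A * t ^ 2 + B * t + C) / lam + (2 * A * t + B) / lam ^ 2 + 2 * A / lam ^ 3)) = F from hfun] at h3
    convert h3 using 1
    · rfl
    · rfl
    have hinv : lam⁻¹ * lam = 1 := inv_mul_cancel₀ hlam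
    field_simp
    ring_nf
  have hcont : Continuous fun τ : ℝ =>
      Complex.exp (((a - τ : ℝ) : ℂ) * lam) * (A * (τ:ℂ)^2 + B * τ + C) := by
    fun_prop
  have := intervalIntegral.integral_eq_sub_of_hasDerivAt
    (f := fun τ : ℝ => F τ)
    (f' := fun τ : ℝ => Complex.exp (((a - τ : ℝ) : ℂ) * lam) * (A * (τ:ℂ)^2 + B * τ + C))
    (a := a) (b := b)
    (fun τ _ => by
      have := (hderiv (τ:ℂ)).comp_ofReal
      convert this using 1
      · rfl
      push_cast
      ring_nf)
    (hcont.intervalIntegrable a b)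
  simpa using this

set_option maxHeartbeats 2000000 in
/-- Filon–Simpson quadrature is exact on the quadratic interpolant. -/
theorem filon_simpson_exact_on_quadratic (lam : ℂ) (Δt : ℝ) (hΔt : 0 < Δt)
    (z : ℂ) (hzdef : z = (Δt : ℂ) * lam) (hz : z ≠ 0)
    (a : ℝ) (Gm G0 Gp : ℂ)
    (P : ℝ → ℂ)
    (hP : ∀ τ : ℝ, P τ =
      Gm * ((τ - a - Δt : ℝ) : ℂ) * ((τ - a - 2 * Δt : ℝ) : ℂ) / (2 * (Δt : ℂ) ^ 2)
      - G0 * ((τ - a : ℝ) : ℂ) * ((τ - a - 2 * Δt : ℝ) : ℂ) / ((Δt : ℂ) ^ 2)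
      + Gp * ((τ - a : ℝ) : ℂ) * ((τ - a - Δt : ℝ) : ℂ) / (2 * (Δt : ℂ) ^ 2))
    (q₁ q₂ q₃ : ℂ)
    (hq₁ : q₁ = (Δt : ℂ) * (-z * Complex.exp (-2 * z) - 2 * Complex.exp (-2 * z)
      + 2 * z ^ 2 - 3 * z + 2) / (2 * z ^ 3))
    (hq₂ : q₂ = (Δt : ℂ) * (2 * z * Complex.exp (-2 * z) + 2 * Complex.exp (-2 * z)
      + 2 * z - 2) / z ^ 3)
    (hq₃ : q₃ = (Δt : ℂ) * (-2 * z ^ 2 * Complex.exp (-2 * z) - 3 * z * Complex.exp (-2 * z)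
      - 2 * Complex.exp (-2 * z) - z + 2) / (2 * z ^ 3)) :
    (∫ τ in a..(a + 2 * Δt), Complex.exp (((a - τ : ℝ) : ℂ) * lam) * P τ)
      = q₁ * Gm + q₂ * G0 + q₃ * Gp := by
  have hΔ : (Δt : ℂ) ≠ 0 := by
    exact_mod_cast (Complex.ofReal_ne_zero.mpr hΔt.ne')
  have hlam : lam ≠ 0 := by
    intro h
    apply hz
    rw [hzdef, h, mul_zero]
  set A : ℂ := (Gm - 2 * G0 + Gp) / (2 * (Δt : ℂ) ^ 2) with hA
  set B : ℂ := ((-3 * Gm + 4 * G0 - Gp) * (Δt : ℂ)) / (2 * (Δt : ℂ) ^ 2)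
      - 2 * (a : ℂ) * A with hB
  set C : ℂ := A * (a : ℂ) ^ 2
      - (((-3 * Gm + 4 * G0 - Gp) * (Δt : ℂ)) / (2 * (Δt : ℂ) ^ 2)) * (a : ℂ)
      + Gm * (2 * (Δt : ℂ) ^ 2) / (2 * (Δt : ℂ) ^ 2) with hC
  have hPeq : ∀ τ : ℝ, P τ = A * (τ : ℂ) ^ 2 + B * (τ : ℂ) + C := by
    intro τ
    rw [hP, hA, hB, hC]
    push_cast
    ring
  have hIcongr : (∫ τ in a..(a + 2 * Δt), Complex.exp (((a - τ : ℝ) : ℂ) * lam) * P τ)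
      = ∫ τ in a..(a + 2 * Δt),
          Complex.exp (((a - τ : ℝ) : ℂ) * lam) * (A * (τ : ℂ) ^ 2 + B * (τ : ℂ) + C) := by
    apply intervalIntegral.integral_congr
    intro τ _
    exact congrArg _ (hPeq τ)
  rw [hIcongr, filon_key lam A B C hlam a (a + 2 * Δt)]
  have hE : Complex.exp (((a : ℂ) - (((a + 2 * Δt : ℝ)) : ℂ)) * lam)
      = Complex.exp (-2 * z) := by
    congr 1
    rw [hzdef]
    push_cast
    ring
  have hE0 : Complex.exp (((a : ℂ) - ((a : ℝ) : ℂ)) * lam) = 1 := by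
    simp
  simp only []
  rw [hE, hE0, hq₁, hq₂, hq₃]
  subst hzdef
  push_cast
  rw [hC, hB, hA]
  have h1 : ((Δt:ℂ) * lam) ^ 3 ≠ 0 := pow_ne_zero _ (mul_ne_zero hΔ hlam)
  have h2 : lam ^ 3 ≠ 0 := pow_ne_zero _ hlam
  have h3 : (Δt:ℂ) ^ 2 ≠ 0 := pow_ne_zero _ hΔ
  have h4 : lam ^ 2 ≠ 0 := pow_ne_zero _ hlam
  field_simp [h1, h2, h3, h4, hΔ, hlam]
  have hK : ((Δt:ℂ) ^ 6 * ((Δt:ℂ))⁻¹ ^ 6) * (lam ^ 6 * lam⁻¹ ^ 6) = 1 := by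
    rw [← mul_pow, ← mul_pow, mul_inv_cancel₀ hΔ, mul_inv_cancel₀ hlam]
    norm_num
  ring
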